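/- Let d ≥ 1, let a, b ∈ ℝ^d with b ≠ 0, and let m₀, m₁ : ℝ → ℝ with m₀ injective. If m₁(aᵀz) = m₀(bᵀz) for every z ∈ ℝ^d, then a ≠ 0 and there exists a nonzero constant c ∈ ℝ such that a = c · b. -/

import Mathlib

open Matrix

/-- Intermediate step in the proof of Proposition 1: two single-index
representations with an injective outer function force the index vectors
to be parallel. -/
theorem single_index_vectors_parallel
    (d : ℕ) (hd : 1 ≤ d) (a b : Fin d → ℝ) (hb : b ≠ 0)
    (m₀ m₁ : ℝ → ℝ) (hm₀inj : Function.Injective m₀)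
    (heq : ∀ z : Fin d → ℝ, m₁ (a ⬝ᵥ z) = m₀ (b ⬝ᵥ z)) :
    a ≠ 0 ∧ ∃ c : ℝ, c ≠ 0 ∧ a = c • b := by
  have hker : ∀ z : Fin d → ℝ, a ⬝ᵥ z = 0 → b ⬝ᵥ z = 0 := by
    intro z hz
    have h1 := heq z
    have h2 := heq 0
    simp only [dotProduct_zero] at h2
    rw [hz, h2] at h1
    exact hm₀inj h1.symm
  have ha : a ≠ 0 := by
    intro h
    apply hb
    have := hker b (by simp [h])
    exact (dotProduct_self_eq_zero).mp this
  have haa : a ⬝ᵥ a ≠ 0 := fun h => ha (dotProduct_self_eq_zero.mp h)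
  set c' : ℝ := (b ⬝ᵥ a) / (a ⬝ᵥ a) with hc'
  have key : ∀ z : Fin d → ℝ, b ⬝ᵥ z = c' * (a ⬝ᵥ z) := by
    intro z
    have hw : a ⬝ᵥ (z - ((a ⬝ᵥ z) / (a ⬝ᵥ a)) • a) = 0 := by
      rw [dotProduct_sub, dotProduct_smul]
      rw [smul_eq_mul, div_mul_cancel₀ _ haa, sub_self]
    have := hker _ hw
    rw [dotProduct_sub, dotProduct_smul, sub_eq_zero] at this
    rw [this, hc', smul_eq_mul]
    ring
  have hbca : b = c' • a := by
    funext i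
    have := key (Pi.single i 1)
    simpa [dotProduct_single] using this
  have hc0 : c' ≠ 0 := by
    intro h
    apply hb
    rw [hbca, h, zero_smul]
  refine ⟨ha, 1 / c', one_div_ne_zero hc0, ?_⟩
  rw [hbca]
  funext i
  simp [Pi.smul_apply, smul_eq_mul]
  field_simp
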